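/- Let n ≥ 1, let P, σ, ε', f > 0, let x, w ∈ ℝⁿ, set y = x + w and α = P/(P + σ²). If ‖x‖² ≤ nP(1+ε')², ‖w‖² ≤ nσ²(1+ε')², and |⟨x, w⟩| ≤ f·σ·‖x‖, then ‖αy − x‖² ≤ (nPσ²/(P+σ²)) · ( (1+ε')² + 2fσ√P(1+ε')/(√n·(P+σ²)) ). -/

import Mathlib

/-- **Effective noise after MMSE scaling.**  Let `P, σ, ε', f > 0`, `x, w ∈ ℝⁿ`, `y = x + w`
and `α = P/(P+σ²)`.  If `‖x‖² ≤ nP(1+ε')²`, `‖w‖² ≤ nσ²(1+ε')²` and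
`|⟨x,w⟩| ≤ f·σ·‖x‖`, then
`‖αy − x‖² ≤ (nPσ²/(P+σ²)) · ((1+ε')² + 2fσ√P(1+ε')/(√n·(P+σ²)))`. -/
theorem mmse_effective_noise_bound (n : ℕ) (hn : 1 ≤ n) (P σ ε' f : ℝ)
    (hP : 0 < P) (hσ : 0 < σ) (hε : 0 < ε') (hf : 0 < f) (x w : Fin n → ℝ)
    (hx : ∑ i, x i ^ 2 ≤ n * P * (1 + ε') ^ 2)
    (hw : ∑ i, w i ^ 2 ≤ n * σ ^ 2 * (1 + ε') ^ 2)
    (hxw : |∑ i, x i * w i| ≤ f * σ * Real.sqrt (∑ i, x i ^ 2)) :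
    ∑ i, ((P / (P + σ ^ 2)) * (x i + w i) - x i) ^ 2
      ≤ (n * P * σ ^ 2 / (P + σ ^ 2)) *
          ((1 + ε') ^ 2 + 2 * f * σ * Real.sqrt P * (1 + ε') / (Real.sqrt n * (P + σ ^ 2))) := by
  have hS : (0:ℝ) < P + σ ^ 2 := by positivity
  set S := P + σ ^ 2 with hSdef
  have hexp : ∑ i, ((P / S) * (x i + w i) - x i) ^ 2
      = (P / S) ^ 2 * ∑ i, w i ^ 2 + (σ ^ 2 / S) ^ 2 * ∑ i, x i ^ 2
        - 2 * (P / S) * (σ ^ 2 / S) * ∑ i, x i * w i := by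
    rw [Finset.mul_sum, Finset.mul_sum, Finset.mul_sum, ← Finset.sum_add_distrib,
      ← Finset.sum_sub_distrib]
    apply Finset.sum_congr rfl
    intro i _
    have h1 : (P / S) * (x i + w i) - x i = (P / S) * w i - (σ ^ 2 / S) * x i := by
      field_simp
      ring
    rw [h1]; ring
  rw [hexp]
  have hsx : Real.sqrt (∑ i, x i ^ 2) ≤ Real.sqrt n * Real.sqrt P * (1 + ε') := by
    have h1 : Real.sqrt (∑ i, x i ^ 2) ≤ Real.sqrt (n * P * (1 + ε') ^ 2) :=
      Real.sqrt_le_sqrt hx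
    have h2 : Real.sqrt ((n : ℝ) * P * (1 + ε') ^ 2)
        = Real.sqrt n * Real.sqrt P * (1 + ε') := by
      rw [Real.sqrt_mul (by positivity), Real.sqrt_mul (by positivity),
        Real.sqrt_sq (by positivity)]
    linarith [h1, h2.le, h2.ge]
  have hcross : - (2 * (P / S) * (σ ^ 2 / S) * ∑ i, x i * w i)
      ≤ 2 * (P / S) * (σ ^ 2 / S) * (f * σ * (Real.sqrt n * Real.sqrt P * (1 + ε'))) := by
    have hc : (0:ℝ) ≤ 2 * (P / S) * (σ ^ 2 / S) := by positivity
    have h1 : - (∑ i, x i * w i) ≤ f * σ * (Real.sqrt n * Real.sqrt P * (1 + ε')) := by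
      have := neg_abs_le (∑ i, x i * w i)
      nlinarith [mul_le_mul_of_nonneg_left hsx (by positivity : (0:ℝ) ≤ f * σ)]
    nlinarith [mul_le_mul_of_nonneg_left h1 hc]
  have hA : (P / S) ^ 2 * ∑ i, w i ^ 2 ≤ (P / S) ^ 2 * (n * σ ^ 2 * (1 + ε') ^ 2) := by
    apply mul_le_mul_of_nonneg_left hw (by positivity)
  have hB : (σ ^ 2 / S) ^ 2 * ∑ i, x i ^ 2 ≤ (σ ^ 2 / S) ^ 2 * (n * P * (1 + ε') ^ 2) := by
    apply mul_le_mul_of_nonneg_left hx (by positivity)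
  have hsn : Real.sqrt n * Real.sqrt n = (n : ℝ) :=
    Real.mul_self_sqrt (by positivity)
  have hsnpos : (0:ℝ) < Real.sqrt n := Real.sqrt_pos.mpr (by exact_mod_cast hn)
  have hkey1 : (P / S) ^ 2 * (n * σ ^ 2 * (1 + ε') ^ 2)
      + (σ ^ 2 / S) ^ 2 * (n * P * (1 + ε') ^ 2)
      = (n * P * σ ^ 2 / S) * (1 + ε') ^ 2 := by
    field_simp
    ring
  have hkey2 : 2 * (P / S) * (σ ^ 2 / S) * (f * σ * (Real.sqrt n * Real.sqrt P * (1 + ε')))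
      = (n * P * σ ^ 2 / S) *
          (2 * f * σ * Real.sqrt P * (1 + ε') / (Real.sqrt n * S)) := by
    field_simp
    linear_combination hsn
  have hrhs : (n * P * σ ^ 2 / S) *
      ((1 + ε') ^ 2 + 2 * f * σ * Real.sqrt P * (1 + ε') / (Real.sqrt n * S))
      = (n * P * σ ^ 2 / S) * (1 + ε') ^ 2
        + (n * P * σ ^ 2 / S) * (2 * f * σ * Real.sqrt P * (1 + ε') / (Real.sqrt n * S)) := by
    ring
  rw [hrhs, ← hkey1, ← hkey2]
  linarith [hA, hB, hcross]
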